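/- Let (Z,A) be generated from SBM(n,k,π,ρ_n S) with nρ_n → ∞ and ρ_n s_max ≤ 1/2, and fix α > 0 and 0 < δ < s_min/2. Then P( for all a,b ∈ [k] and all e ∈ F(n,α): o_{ab}(e)/(ρ_n n_{ab}(e)) ∈ (s_min − δ, s_max + δ) ) → 1 as n → ∞. -/

import Mathlib

open Finset Filter
open scoped Classical BigOperators Topology

noncomputable section

namespace SBM

variable {n k : ℕ}

/-- Number of nodes with label `a`. -/
def nCount (z : Fin n → Fin k) (a : Fin k) : ℕ :=
  (Finset.univ.filter fun i => z i = a).card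

/-- `n_{ab}(z)`. -/
def nab (z : Fin n → Fin k) (a b : Fin k) : ℝ :=
  if a = b then (nCount z a : ℝ) * ((nCount z a : ℝ) - 1)
  else (nCount z a : ℝ) * (nCount z b : ℝ)

/-- `o_{ab}(z)`: number of (ordered) edges between communities `a` and `b`. -/
def oab (A : Fin n → Fin n → Bool) (z : Fin n → Fin k) (a b : Fin k) : ℝ :=
  ∑ i : Fin n, ∑ j : Fin n, if z i = a ∧ z j = b ∧ A i j = true then (1 : ℝ) else 0

/-- `τ(x) = x log x + (1-x) log(1-x)` (with `Real.log 0 = 0`, so `0 log 0 = 0`). -/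
def tau (x : ℝ) : ℝ := x * Real.log x + (1 - x) * Real.log (1 - x)

/-- Maximum likelihood modularity. -/
def QML (A : Fin n → Fin n → Bool) (z : Fin n → Fin k) : ℝ :=
  (1 / (2 * (n : ℝ) ^ 2)) *
    ∑ a : Fin k, ∑ b : Fin k, nab z a b * tau (oab A z a b / nab z a b)

/-- The Beta function. -/
def Beta (x y : ℝ) : ℝ := Real.Gamma x * Real.Gamma y / Real.Gamma (x + y)

def otilde (A : Fin n → Fin n → Bool) (z : Fin n → Fin k) (a b : Fin k) : ℝ :=
  if a = b then oab A z a b / 2 else oab A z a b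

def ntilde (z : Fin n → Fin k) (a b : Fin k) : ℝ :=
  if a = b then nab z a b / 2 else nab z a b

/-- Integrated conditional likelihood modularity. -/
def QICL (A : Fin n → Fin n → Bool) (z : Fin n → Fin k) : ℝ :=
  (1 / (n : ℝ) ^ 2) *
    ∑ p ∈ Finset.univ.filter (fun p : Fin k × Fin k => p.1 ≤ p.2),
      Real.log (Beta (otilde A z p.1 p.2 + 1 / 2)
          (ntilde z p.1 p.2 - otilde A z p.1 p.2 + 1 / 2) / Beta (1 / 2) (1 / 2))

/-- The adjacency matrix is symmetric with zero diagonal. -/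
def ValidAdj (A : Fin n → Fin n → Bool) : Prop :=
  (∀ i j, A i j = A j i) ∧ ∀ i, A i i = false

/-- Density of the conditional SBM edge model given the labels `z`:
independent Bernoulli(`ρ S (z i) (z j)`) edges for `i < j`. -/
def edgeDensity (ρ : ℝ) (S : Matrix (Fin k) (Fin k) ℝ) (z : Fin n → Fin k)
    (A : Fin n → Fin n → Bool) : ℝ :=
  ∏ p ∈ Finset.univ.filter (fun p : Fin n × Fin n => p.1 < p.2),
    (if A p.1 p.2 then ρ * S (z p.1) (z p.2) else 1 - ρ * S (z p.1) (z p.2))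

/-- Conditional probability of an event on the adjacency matrix, given labels `z`. -/
def condProb (ρ : ℝ) (S : Matrix (Fin k) (Fin k) ℝ) (z : Fin n → Fin k)
    (E : (Fin n → Fin n → Bool) → Prop) : ℝ :=
  ∑ A : Fin n → Fin n → Bool, if ValidAdj A ∧ E A then edgeDensity ρ S z A else 0

/-- Conditional expectation of a function of the adjacency matrix, given labels `z`. -/
def condExp (ρ : ℝ) (S : Matrix (Fin k) (Fin k) ℝ) (z : Fin n → Fin k)
    (f : (Fin n → Fin n → Bool) → ℝ) : ℝ :=
  ∑ A : Fin n → Fin n → Bool, if ValidAdj A then edgeDensity ρ S z A * f A else 0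

/-- Probability of an event under the SBM: labels are i.i.d. `π`, edges are conditionally
independent Bernoulli(`ρ S (z i) (z j)`). -/
def sbmProb (π : Fin k → ℝ) (ρ : ℝ) (S : Matrix (Fin k) (Fin k) ℝ)
    (E : (Fin n → Fin k) → (Fin n → Fin n → Bool) → Prop) : ℝ :=
  ∑ z : Fin n → Fin k, (∏ i, π (z i)) * condProb ρ S z (E z)

/-- Number of disagreements between two label vectors. -/
def hamming (e z : Fin n → Fin k) : ℕ :=
  (Finset.univ.filter fun i => e i ≠ z i).card

/-- Misclassification distance: minimum number of disagreements over permutations of labels. -/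
def mDist (e z : Fin n → Fin k) : ℕ :=
  Finset.univ.inf' ⟨Equiv.refl (Fin k), Finset.mem_univ _⟩
    (fun σ : Equiv.Perm (Fin k) => (Finset.univ.filter fun i => e i ≠ σ (z i)).card)

/-- Confusion matrix `R(e,z)`. -/
def confusion (e z : Fin n → Fin k) : Matrix (Fin k) (Fin k) ℝ :=
  Matrix.of fun a b => (1 / (n : ℝ)) * ∑ i : Fin n, if e i = a ∧ z i = b then (1 : ℝ) else 0

/-- `[R 1]_a` : row sums. -/
def rowSum (R : Matrix (Fin k) (Fin k) ℝ) (a : Fin k) : ℝ := ∑ j, R a j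

/-- `[Rᵀ 1]_a` : column sums. -/
def colSum (R : Matrix (Fin k) (Fin k) ℝ) (a : Fin k) : ℝ := ∑ i, R i a

/-- `[P_R]_{ab}`. -/
def PR (P R : Matrix (Fin k) (Fin k) ℝ) (n : ℕ) (a b : Fin k) : ℝ :=
  ((R * P * R.transpose) a b - (if a = b then (∑ i, P i i * R a i) / n else 0)) /
    (rowSum R a * (rowSum R b - if a = b then 1 / (n : ℝ) else 0))

/-- The population modularity `H_{P,n}(R)`. -/
def Hmod (P R : Matrix (Fin k) (Fin k) ℝ) (n : ℕ) : ℝ :=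
  (1 / 2) * ∑ a : Fin k, ∑ b : Fin k,
    rowSum R a * (rowSum R b - if a = b then 1 / (n : ℝ) else 0) * tau (PR P R n a b)

/-- The centered modularity `X(e,z)` (with `P = ρ S`). -/
def Xfun (ρ : ℝ) (S : Matrix (Fin k) (Fin k) ℝ) (A : Fin n → Fin n → Bool)
    (e z : Fin n → Fin k) : ℝ :=
  (1 / (2 * (n : ℝ) ^ 2)) * ∑ a : Fin k, ∑ b : Fin k,
    nab e a b * (tau (oab A e a b / nab e a b) - tau (PR (ρ • S) (confusion e z) n a b))

/-- The limit functional `G_S(R)` (terms with `[RSRᵀ]_{ab} = 0` vanish). -/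
def GS (S R : Matrix (Fin k) (Fin k) ℝ) : ℝ :=
  ∑ a : Fin k, ∑ b : Fin k,
    (R * S * R.transpose) a b *
      Real.log ((R * S * R.transpose) a b / (rowSum R a * rowSum R b))

/-- Entry-wise `ℓ¹` norm of a matrix. -/
def l1norm (M : Matrix (Fin k) (Fin k) ℝ) : ℝ := ∑ a : Fin k, ∑ b : Fin k, |M a b|

/-- `s_max`. -/
def sMax (S : Matrix (Fin k) (Fin k) ℝ) : ℝ :=
  sSup (Set.range fun p : Fin k × Fin k => S p.1 p.2)

/-- `s_min`. -/
def sMin (S : Matrix (Fin k) (Fin k) ℝ) : ℝ :=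
  sInf (Set.range fun p : Fin k × Fin k => S p.1 p.2)

/-- `H_t(p‖q) = (1-t)p + tq - p^{1-t} q^t`. -/
def Ht (t p q : ℝ) : ℝ := (1 - t) * p + t * q - p ^ (1 - t) * q ^ t

/-- `max_{t ∈ [0,1]} Σ_a π_a H_t(S_{ab} ‖ S_{ab'})`. -/
def CtMax (π : Fin k → ℝ) (S : Matrix (Fin k) (Fin k) ℝ) (b b' : Fin k) : ℝ :=
  sSup ((fun t => ∑ a : Fin k, π a * Ht t (S a b) (S a b')) '' Set.Icc (0 : ℝ) 1)

/-- The phase-transition constant `C(π,S)`. -/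
def Cconst (π : Fin k → ℝ) (S : Matrix (Fin k) (Fin k) ℝ) : ℝ :=
  sInf {x : ℝ | ∃ b b' : Fin k, b ≠ b' ∧ x = CtMax π S b b'}

/-- `K_t(p‖q) = p^{1-t} q^t + t p log(p/q) - p`. -/
def Kt (t p q : ℝ) : ℝ := p ^ (1 - t) * q ^ t + t * p * Real.log (p / q) - p

/-- `K₁(p‖q) = p log(p/q) + q - p`. -/
def K1 (p q : ℝ) : ℝ := p * Real.log (p / q) + q - p

/-- Kullback–Leibler divergence between Bernoulli(s) and Bernoulli(t). -/
def KLBern (s t : ℝ) : ℝ := s * Real.log (s / t) + (1 - s) * Real.log ((1 - s) / (1 - t))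

/-- Off-diagonal pairs of labels. -/
def offDiag (k : ℕ) : Finset (Fin k × Fin k) :=
  Finset.univ.filter fun p => p.1 ≠ p.2

/-- `C_t(R,S) = Σ_a Σ_{b ≠ b'} [Rᵀ1]_a K_t(S_{ab}‖S_{ab'}) R_{b'b}`. -/
def CtRS (t : ℝ) (R S : Matrix (Fin k) (Fin k) ℝ) : ℝ :=
  ∑ a : Fin k, ∑ p ∈ offDiag k, colSum R a * Kt t (S a p.1) (S a p.2) * R p.2 p.1

/-- Membership in `F(n,α)`: all communities have size at least `α n`. -/
def inF (α : ℝ) (z : Fin n → Fin k) : Prop := ∀ a, α * n ≤ (nCount z a : ℝ)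

/-- `zh` is a maximizer of the ML modularity over `F(n,α)`. -/
def IsMLE (α : ℝ) (A : Fin n → Fin n → Bool) (zh : Fin n → Fin k) : Prop :=
  inF α zh ∧ ∀ e : Fin n → Fin k, inF α e → QML A e ≤ QML A zh

/-- `zh` is a maximizer of the ICL modularity over `F(n,α)`. -/
def IsICL (α : ℝ) (A : Fin n → Fin n → Bool) (zh : Fin n → Fin k) : Prop :=
  inF α zh ∧ ∀ e : Fin n → Fin k, inF α e → QICL A e ≤ QICL A zh


/-! ### Auxiliary machinery for the proof of `stmt13` -/

set_option linter.unusedSectionVars false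

lemma sum_fn_prod {ι κ : Type*} [Fintype ι] [DecidableEq ι] [Fintype κ] (g : ι → κ → ℝ) :
    ∑ f : ι → κ, ∏ i, g i (f i) = ∏ i, ∑ j, g i j := by
  rw [Finset.prod_univ_sum, Fintype.piFinset_univ]

section Generic
variable {ι : Type*} [Fintype ι] [DecidableEq ι]

def wprod (w : ι → ℝ) (B : ι → Bool) : ℝ := ∏ l, (if B l then w l else 1 - w l)

def Xc (T : Finset ι) (B : ι → Bool) : ℝ := ∑ l ∈ T, (if B l then (1 : ℝ) else 0)

lemma wprod_nonneg {w : ι → ℝ} (hw0 : ∀ l, 0 ≤ w l) (hw1 : ∀ l, w l ≤ 1) (B : ι → Bool) :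
    0 ≤ wprod w B := by
  refine Finset.prod_nonneg fun l _ => ?_
  rcases B l with _ | _ <;> simp [hw0 l, hw1 l, sub_nonneg]

lemma total_generic (w : ι → ℝ) : ∑ B : ι → Bool, wprod w B = 1 := by
  unfold wprod
  refine Eq.trans (sum_fn_prod (κ := Bool) (fun l b => if b then w l else 1 - w l)) ?_
  have : ∀ l : ι, ∑ b : Bool, (if b then w l else 1 - w l) = 1 := by
    intro l; simp
  simp [this]

lemma mgf_generic (w : ι → ℝ) (T : Finset ι) (lam : ℝ) :
    ∑ B : ι → Bool, wprod w B * Real.exp (lam * Xc T B)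
      = ∏ l ∈ T, (1 - w l + w l * Real.exp lam) := by
  have key : ∀ B : ι → Bool,
      wprod w B * Real.exp (lam * Xc T B)
        = ∏ l, ((if B l then w l else 1 - w l) *
            (if l ∈ T then Real.exp (lam * (if B l then (1 : ℝ) else 0)) else 1)) := by
    intro B
    rw [Finset.prod_mul_distrib]
    unfold wprod Xc
    congr 1
    rw [Finset.mul_sum, Real.exp_sum]
    rw [Finset.prod_ite_mem, Finset.univ_inter]
  simp_rw [key]
  refine Eq.trans (sum_fn_prod (κ := Bool) (fun l b => (if b then w l else 1 - w l) *
    (if l ∈ T then Real.exp (lam * (if b then (1 : ℝ) else 0)) else 1))) ?_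
  have h2 : ∀ i : ι, (∑ b : Bool, (if b then w i else 1 - w i) *
      (if i ∈ T then Real.exp (lam * (if b then (1 : ℝ) else 0)) else 1))
      = (if i ∈ T then 1 - w i + w i * Real.exp lam else 1) := by
    intro i; by_cases h : i ∈ T <;> simp [h] <;> ring
  rw [Finset.prod_congr rfl (fun i _ => h2 i), Finset.prod_ite_mem, Finset.univ_inter]

lemma chernoff_up (w : ι → ℝ) (hw0 : ∀ l, 0 ≤ w l) (hw1 : ∀ l, w l ≤ 1)
    (T : Finset ι) (lam x : ℝ) (hlam : 0 ≤ lam) :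
    ∑ B : ι → Bool, wprod w B * (if x ≤ Xc T B then (1 : ℝ) else 0)
      ≤ Real.exp ((∑ l ∈ T, w l) * (Real.exp lam - 1) - lam * x) := by
  have step1 : ∑ B : ι → Bool, wprod w B * (if x ≤ Xc T B then (1 : ℝ) else 0)
      ≤ ∑ B : ι → Bool, wprod w B * (Real.exp (-(lam * x)) * Real.exp (lam * Xc T B)) := by
    refine Finset.sum_le_sum fun B _ => ?_
    refine mul_le_mul_of_nonneg_left ?_ (wprod_nonneg hw0 hw1 B)
    rw [← Real.exp_add]
    by_cases h : x ≤ Xc T B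
    · rw [if_pos h]
      refine Real.one_le_exp ?_
      nlinarith [mul_nonneg hlam (sub_nonneg.mpr h)]
    · rw [if_neg h]; positivity
  refine step1.trans ?_
  have heq : ∑ B : ι → Bool, wprod w B * (Real.exp (-(lam * x)) * Real.exp (lam * Xc T B))
      = Real.exp (-(lam * x)) * ∑ B : ι → Bool, wprod w B * Real.exp (lam * Xc T B) := by
    rw [Finset.mul_sum]; refine Finset.sum_congr rfl fun B _ => by ring
  rw [heq, mgf_generic]
  have hb : ∏ l ∈ T, (1 - w l + w l * Real.exp lam)
      ≤ ∏ l ∈ T, Real.exp (w l * (Real.exp lam - 1)) := by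
    refine Finset.prod_le_prod (fun l _ => ?_) (fun l _ => ?_)
    · nlinarith [Real.one_le_exp hlam, hw0 l, hw1 l]
    · have := Real.add_one_le_exp (w l * (Real.exp lam - 1))
      linarith
  calc Real.exp (-(lam * x)) * ∏ l ∈ T, (1 - w l + w l * Real.exp lam)
      ≤ Real.exp (-(lam * x)) * ∏ l ∈ T, Real.exp (w l * (Real.exp lam - 1)) :=
        mul_le_mul_of_nonneg_left hb (Real.exp_nonneg _)
    _ = Real.exp ((∑ l ∈ T, w l) * (Real.exp lam - 1) - lam * x) := by
        rw [← Real.exp_sum, ← Real.exp_add]; congr 1; rw [Finset.sum_mul]; ring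

lemma chernoff_down (w : ι → ℝ) (hw0 : ∀ l, 0 ≤ w l) (hw1 : ∀ l, w l ≤ 1)
    (T : Finset ι) (lam x : ℝ) (hlam : lam ≤ 0) :
    ∑ B : ι → Bool, wprod w B * (if Xc T B ≤ x then (1 : ℝ) else 0)
      ≤ Real.exp ((∑ l ∈ T, w l) * (Real.exp lam - 1) - lam * x) := by
  have step1 : ∑ B : ι → Bool, wprod w B * (if Xc T B ≤ x then (1 : ℝ) else 0)
      ≤ ∑ B : ι → Bool, wprod w B * (Real.exp (-(lam * x)) * Real.exp (lam * Xc T B)) := by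
    refine Finset.sum_le_sum fun B _ => ?_
    refine mul_le_mul_of_nonneg_left ?_ (wprod_nonneg hw0 hw1 B)
    rw [← Real.exp_add]
    by_cases h : Xc T B ≤ x
    · rw [if_pos h]
      refine Real.one_le_exp ?_
      nlinarith [mul_nonneg (neg_nonneg.mpr hlam) (sub_nonneg.mpr h)]
    · rw [if_neg h]; positivity
  refine step1.trans ?_
  have heq : ∑ B : ι → Bool, wprod w B * (Real.exp (-(lam * x)) * Real.exp (lam * Xc T B))
      = Real.exp (-(lam * x)) * ∑ B : ι → Bool, wprod w B * Real.exp (lam * Xc T B) := by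
    rw [Finset.mul_sum]; refine Finset.sum_congr rfl fun B _ => by ring
  rw [heq, mgf_generic]
  have hb : ∏ l ∈ T, (1 - w l + w l * Real.exp lam)
      ≤ ∏ l ∈ T, Real.exp (w l * (Real.exp lam - 1)) := by
    refine Finset.prod_le_prod (fun l _ => ?_) (fun l _ => ?_)
    · nlinarith [Real.exp_pos lam, hw0 l, hw1 l]
    · have := Real.add_one_le_exp (w l * (Real.exp lam - 1))
      linarith
  calc Real.exp (-(lam * x)) * ∏ l ∈ T, (1 - w l + w l * Real.exp lam)
      ≤ Real.exp (-(lam * x)) * ∏ l ∈ T, Real.exp (w l * (Real.exp lam - 1)) :=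
        mul_le_mul_of_nonneg_left hb (Real.exp_nonneg _)
    _ = Real.exp ((∑ l ∈ T, w l) * (Real.exp lam - 1) - lam * x) := by
        rw [← Real.exp_sum, ← Real.exp_add]; congr 1; rw [Finset.sum_mul]; ring

lemma exp_le_quad {x : ℝ} (hx : |x| ≤ 1) : Real.exp x ≤ 1 + x + x ^ 2 := by
  have h := Real.exp_bound hx (n := 2) (by norm_num)
  have h2 : ∑ m ∈ range 2, x ^ m / (m.factorial : ℝ) = 1 + x := by
    simp [Finset.sum_range_succ]
  rw [h2] at h
  rw [Nat.succ_eq_add_one] at h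
  norm_num [Nat.factorial] at h
  have := abs_le.mp h
  nlinarith [sq_nonneg x, sq_abs x, this.2]

set_option maxHeartbeats 1000000 in
lemma bad_tails (w : ι → ℝ) (T : Finset ι)
    (ρ smin smax δ : ℝ) (hρ : 0 < ρ) (hsmax : 0 < smax) (hδ : 0 < δ)
    (hw0 : ∀ l, 0 ≤ w l) (hw1 : ∀ l, w l ≤ 1)
    (hlo : ∀ l ∈ T, ρ * smin ≤ w l) (hhi : ∀ l ∈ T, w l ≤ ρ * smax) :
    (∑ B : ι → Bool, wprod w B * (if (smax + δ) * (ρ * T.card) ≤ Xc T B then (1:ℝ) else 0))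
      ≤ Real.exp (-(min 1 (δ / (2 * smax)) * δ / 2) * (ρ * T.card))
    ∧ (∑ B : ι → Bool, wprod w B * (if Xc T B ≤ (smin - δ) * (ρ * T.card) then (1:ℝ) else 0))
      ≤ Real.exp (-(min 1 (δ / (2 * smax)) * δ / 2) * (ρ * T.card)) := by
  set lam0 := min 1 (δ / (2 * smax)) with hlam0def
  set m := (T.card : ℝ) with hmdef
  set μ := ∑ l ∈ T, w l with hmudef
  have hlam0pos : 0 < lam0 := lt_min one_pos (by positivity)
  have hlam0le1 : lam0 ≤ 1 := min_le_left _ _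
  have hlam0le : lam0 * smax ≤ δ / 2 := by
    have h := min_le_right 1 (δ / (2 * smax))
    have : lam0 * smax ≤ (δ / (2 * smax)) * smax := by nlinarith
    calc lam0 * smax ≤ (δ / (2 * smax)) * smax := this
      _ = δ / 2 := by field_simp
  have hexpu : Real.exp lam0 ≤ 1 + lam0 + lam0 ^ 2 :=
    exp_le_quad (by rw [abs_of_pos hlam0pos]; exact hlam0le1)
  have hexpd : Real.exp (-lam0) ≤ 1 - lam0 + lam0 ^ 2 := by
    have h := exp_le_quad (x := -lam0) (by rw [abs_neg, abs_of_pos hlam0pos]; exact hlam0le1)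
    nlinarith [h]
  have hm0 : (0:ℝ) ≤ m := Nat.cast_nonneg _
  have hSwhi : μ ≤ ρ * smax * m := by
    have h := Finset.sum_le_card_nsmul T w (ρ * smax) hhi
    rw [nsmul_eq_mul] at h
    calc μ ≤ m * (ρ * smax) := h
      _ = ρ * smax * m := by ring
  have hSwlo : ρ * smin * m ≤ μ := by
    have h := Finset.card_nsmul_le_sum T w (ρ * smin) hlo
    rw [nsmul_eq_mul] at h
    calc ρ * smin * m = m * (ρ * smin) := by ring
      _ ≤ μ := h
  have hSw0 : 0 ≤ μ := Finset.sum_nonneg fun l _ => hw0 l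
  constructor
  · refine (chernoff_up w hw0 hw1 T lam0 _ hlam0pos.le).trans ?_
    apply Real.exp_le_exp.mpr
    have he1 : 0 ≤ Real.exp lam0 - 1 := by nlinarith [Real.add_one_le_exp lam0]
    have h1 : μ * (Real.exp lam0 - 1) ≤ (ρ * smax * m) * (Real.exp lam0 - 1) :=
      mul_le_mul_of_nonneg_right hSwhi he1
    have h2 : (ρ * smax * m) * (Real.exp lam0 - 1) ≤ (ρ * smax * m) * (lam0 + lam0 ^ 2) := by
      have : (0:ℝ) ≤ ρ * smax * m := by positivity
      nlinarith [hexpu]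
    have h3 : (ρ * m * lam0) * (lam0 * smax) ≤ (ρ * m * lam0) * (δ / 2) := by
      have : (0:ℝ) ≤ ρ * m * lam0 := by positivity
      nlinarith [hlam0le]
    nlinarith [h1, h2, h3]
  · refine (chernoff_down w hw0 hw1 T (-lam0) _ (by linarith)).trans ?_
    apply Real.exp_le_exp.mpr
    have h1 : μ * (Real.exp (-lam0) - 1) ≤ μ * (-lam0 + lam0 ^ 2) := by
      nlinarith [hexpd, hSw0]
    have h2 : lam0 * (ρ * smin * m) ≤ lam0 * μ := by
      nlinarith [hSwlo, hlam0pos.le]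
    have h3 : lam0 ^ 2 * μ ≤ lam0 ^ 2 * (ρ * smax * m) := by
      nlinarith [hSwhi, sq_nonneg lam0]
    have h4 : (ρ * m * lam0) * (lam0 * smax) ≤ (ρ * m * lam0) * (δ / 2) := by
      have : (0:ℝ) ≤ ρ * m * lam0 := by positivity
      nlinarith [hlam0le]
    nlinarith [h1, h2, h3, h4]

end Generic

abbrev PI (n : ℕ) := {p : Fin n × Fin n // p.1 < p.2}

def symA {n : ℕ} (B : PI n → Bool) : Fin n → Fin n → Bool := fun i j =>
  if h : i < j then B ⟨(i, j), h⟩ else if h : j < i then B ⟨(j, i), h⟩ else false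

lemma symA_valid (B : PI n → Bool) : ValidAdj (symA B) := by
  constructor
  · intro i j
    unfold symA
    rcases lt_trichotomy i j with h | h | h
    · rw [dif_pos h, dif_neg (asymm h), dif_pos h]
    · subst h; simp
    · rw [dif_neg (asymm h), dif_pos h, dif_pos h]
  · intro i; unfold symA; simp

def restr {n : ℕ} (A : Fin n → Fin n → Bool) : PI n → Bool := fun l => A l.1.1 l.1.2

lemma restr_symA (B : PI n → Bool) : restr (symA B) = B := by
  funext l
  unfold restr symA
  rw [dif_pos l.2]

lemma symA_restr {A : Fin n → Fin n → Bool} (hA : ValidAdj A) : symA (restr A) = A := by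
  funext i j
  unfold symA restr
  rcases lt_trichotomy i j with h | h | h
  · rw [dif_pos h]
  · subst h; simp [hA.2 i]
  · rw [dif_neg (asymm h), dif_pos h]
    exact hA.1 j i

lemma symA_apply (B : PI n → Bool) (l : PI n) : symA B l.1.1 l.1.2 = B l := by
  unfold symA
  rw [dif_pos l.2]

lemma symA_apply' (B : PI n → Bool) (l : PI n) : symA B l.1.2 l.1.1 = B l := by
  unfold symA
  rw [dif_neg (asymm l.2), dif_pos l.2]

lemma sum_valid (F : (Fin n → Fin n → Bool) → ℝ) :
    ∑ A : Fin n → Fin n → Bool, (if ValidAdj A then F A else 0)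
      = ∑ B : PI n → Bool, F (symA B) := by
  classical
  rw [← Finset.sum_filter]
  refine Finset.sum_nbij' (fun A => restr A) (fun B => symA B) ?_ ?_ ?_ ?_ ?_
  · intro A hA; exact Finset.mem_univ _
  · intro B _; simp only [Finset.mem_filter, Finset.mem_univ, true_and]
    exact symA_valid B
  · intro A hA
    simp only [Finset.mem_filter, Finset.mem_univ, true_and] at hA
    exact symA_restr hA
  · intro B _; exact restr_symA B
  · intro A hA
    simp only [Finset.mem_filter, Finset.mem_univ, true_and] at hA
    rw [symA_restr hA]

lemma card_lt_filter (e : Fin n → Fin k) (a b : Fin k) :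
    ((Finset.univ ×ˢ Finset.univ).filter fun p : Fin n × Fin n =>
        p.1 < p.2 ∧ (e p.1 = a ∧ e p.2 = b)).card
      = (Finset.univ.filter fun l : PI n => e l.1.1 = a ∧ e l.1.2 = b).card := by
  refine Finset.card_bij' (fun p hp => (⟨p, (Finset.mem_filter.mp hp).2.1⟩ : PI n))
    (fun l _ => l.1) ?_ ?_ ?_ ?_
  · intro p hp
    simp only [Finset.mem_filter, Finset.mem_univ, true_and]
    exact (Finset.mem_filter.mp hp).2.2
  · intro l hl
    simp only [Finset.mem_filter, Finset.mem_univ, true_and] at hl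
    exact Finset.mem_filter.mpr ⟨Finset.mem_product.mpr ⟨Finset.mem_univ _, Finset.mem_univ _⟩, l.2, hl⟩
  · intro p hp; rfl
  · intro l hl; rfl

lemma card_gt_filter (e : Fin n → Fin k) (a b : Fin k) :
    ((Finset.univ ×ˢ Finset.univ).filter fun p : Fin n × Fin n =>
        p.2 < p.1 ∧ (e p.1 = a ∧ e p.2 = b)).card
      = (Finset.univ.filter fun l : PI n => e l.1.2 = a ∧ e l.1.1 = b).card := by
  refine Finset.card_bij' (fun p hp => (⟨p.swap, (Finset.mem_filter.mp hp).2.1⟩ : PI n))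
    (fun l _ => l.1.swap) ?_ ?_ ?_ ?_
  · intro p hp
    simp only [Finset.mem_filter, Finset.mem_univ, true_and, Prod.fst_swap, Prod.snd_swap]
    exact (Finset.mem_filter.mp hp).2.2
  · intro l hl
    simp only [Finset.mem_filter, Finset.mem_univ, true_and] at hl
    refine Finset.mem_filter.mpr ⟨Finset.mem_product.mpr ⟨Finset.mem_univ _, Finset.mem_univ _⟩, ?_, ?_⟩
    · simpa using l.2
    · simpa using hl
  · intro p hp; simp
  · intro l hl; simp

def Tset (e : Fin n → Fin k) (a b : Fin k) : Finset (PI n) :=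
  Finset.univ.filter fun l => (e l.1.1 = a ∧ e l.1.2 = b) ∨ (e l.1.1 = b ∧ e l.1.2 = a)

def Dset (e : Fin n → Fin k) (a b : Fin k) : Finset (Fin n × Fin n) :=
  (Finset.univ ×ˢ Finset.univ).filter fun p => p.1 ≠ p.2 ∧ e p.1 = a ∧ e p.2 = b

lemma Dset_card_split (e : Fin n → Fin k) (a b : Fin k) :
    (Dset e a b).card
      = (Finset.univ.filter fun l : PI n => e l.1.1 = a ∧ e l.1.2 = b).card
        + (Finset.univ.filter fun l : PI n => e l.1.2 = a ∧ e l.1.1 = b).card := by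
  have hd : Dset e a b
      = ((Finset.univ ×ˢ Finset.univ).filter fun p : Fin n × Fin n =>
          p.1 < p.2 ∧ (e p.1 = a ∧ e p.2 = b))
        ∪ ((Finset.univ ×ˢ Finset.univ).filter fun p : Fin n × Fin n =>
          p.2 < p.1 ∧ (e p.1 = a ∧ e p.2 = b)) := by
    rw [← Finset.filter_or]
    refine Finset.filter_congr fun p _ => ?_
    constructor
    · rintro ⟨hne, h⟩
      rcases lt_or_gt_of_ne hne with h' | h'
      · exact Or.inl ⟨h', h⟩
      · exact Or.inr ⟨h', h⟩
    · rintro (⟨h', h⟩ | ⟨h', h⟩)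
      · exact ⟨ne_of_lt h', h⟩
      · exact ⟨(ne_of_lt h').symm, h⟩
  have hdisj : Disjoint
      ((Finset.univ ×ˢ Finset.univ).filter fun p : Fin n × Fin n =>
          p.1 < p.2 ∧ (e p.1 = a ∧ e p.2 = b))
      ((Finset.univ ×ˢ Finset.univ).filter fun p : Fin n × Fin n =>
          p.2 < p.1 ∧ (e p.1 = a ∧ e p.2 = b)) := by
    rw [Finset.disjoint_left]
    intro p h1 h2
    exact absurd (Finset.mem_filter.mp h2).2.1 (asymm (Finset.mem_filter.mp h1).2.1)
  rw [hd, Finset.card_union_of_disjoint hdisj, card_lt_filter, card_gt_filter]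

lemma Dset_card_eq_nab (e : Fin n → Fin k) (a b : Fin k) :
    ((Dset e a b).card : ℝ) = nab e a b := by
  by_cases hab : a = b
  · subst hab
    have hD : Dset e a a = (Finset.univ.filter fun i => e i = a).offDiag := by
      ext p
      simp only [Dset, Finset.mem_filter, Finset.mem_product, Finset.mem_univ, true_and,
        Finset.mem_offDiag]
      tauto
    rw [hD, Finset.offDiag_card]
    have hle : (Finset.univ.filter fun i => e i = a).card
        ≤ (Finset.univ.filter fun i => e i = a).card * (Finset.univ.filter fun i => e i = a).card := by
      rcases Nat.eq_zero_or_pos (Finset.univ.filter fun i => e i = a).card with h | h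
      · simp [h]
      · exact Nat.le_mul_of_pos_left _ h
    rw [nab, if_pos rfl]
    unfold nCount
    rw [Nat.cast_sub hle]
    push_cast
    ring
  · have hD : Dset e a b = ((Finset.univ.filter fun i => e i = a) ×ˢ (Finset.univ.filter fun i => e i = b)) := by
      ext p
      simp only [Dset, Finset.mem_filter, Finset.mem_product, Finset.mem_univ, true_and]
      constructor
      · rintro ⟨_, h⟩; exact h
      · rintro ⟨h1, h2⟩
        refine ⟨fun hc => hab ?_, h1, h2⟩
        rw [← h1, hc, h2]
    rw [hD, Finset.card_product]
    rw [nab, if_neg hab]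
    unfold nCount
    push_cast
    ring

lemma nab_eq_Tcard (e : Fin n → Fin k) (a b : Fin k) :
    nab e a b = (if a = b then (2 : ℝ) else 1) * ((Tset e a b).card : ℝ) := by
  rw [← Dset_card_eq_nab]
  have hsplit := Dset_card_split e a b
  by_cases hab : a = b
  · subst hab
    have hT : Tset e a a = Finset.univ.filter fun l : PI n => e l.1.1 = a ∧ e l.1.2 = a := by
      unfold Tset; refine Finset.filter_congr fun l _ => by tauto
    have h2 : (Finset.univ.filter fun l : PI n => e l.1.2 = a ∧ e l.1.1 = a)
        = Finset.univ.filter fun l : PI n => e l.1.1 = a ∧ e l.1.2 = a :=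
      Finset.filter_congr fun l _ => by tauto
    rw [if_pos rfl, hT]
    rw [h2] at hsplit
    rw [hsplit]
    push_cast
    ring
  · have hT : Tset e a b
        = (Finset.univ.filter fun l : PI n => e l.1.1 = a ∧ e l.1.2 = b)
          ∪ (Finset.univ.filter fun l : PI n => e l.1.1 = b ∧ e l.1.2 = a) := by
      unfold Tset; rw [← Finset.filter_or]
    have hdisj : Disjoint
        (Finset.univ.filter fun l : PI n => e l.1.1 = a ∧ e l.1.2 = b)
        (Finset.univ.filter fun l : PI n => e l.1.1 = b ∧ e l.1.2 = a) := by
      rw [Finset.disjoint_left]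
      intro l h1 h2
      have h1' := (Finset.mem_filter.mp h1).2
      have h2' := (Finset.mem_filter.mp h2).2
      exact hab (h1'.1.symm.trans h2'.1)
    have h2 : (Finset.univ.filter fun l : PI n => e l.1.2 = a ∧ e l.1.1 = b)
        = Finset.univ.filter fun l : PI n => e l.1.1 = b ∧ e l.1.2 = a :=
      Finset.filter_congr fun l _ => by tauto
    rw [if_neg hab, hT, Finset.card_union_of_disjoint hdisj]
    rw [h2] at hsplit
    rw [hsplit]
    push_cast
    ring

lemma sum_offdiag (f : Fin n → Fin n → ℝ) (hdiag : ∀ i, f i i = 0) :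
    ∑ i, ∑ j, f i j = ∑ l : PI n, (f l.1.1 l.1.2 + f l.1.2 l.1.1) := by
  rw [← Finset.sum_product']
  rw [← Finset.sum_filter_add_sum_filter_not (Finset.univ ×ˢ Finset.univ)
    (fun p : Fin n × Fin n => p.1 < p.2) (fun p => f p.1 p.2)]
  have h2 : ∑ p ∈ (Finset.univ ×ˢ Finset.univ).filter
        (fun p : Fin n × Fin n => ¬p.1 < p.2), f p.1 p.2
      = ∑ p ∈ (Finset.univ ×ˢ Finset.univ).filter
        (fun p : Fin n × Fin n => p.2 < p.1), f p.1 p.2 := by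
    refine (Finset.sum_subset ?_ ?_).symm
    · intro p hp
      simp only [Finset.mem_filter] at hp ⊢
      exact ⟨hp.1, asymm hp.2⟩
    · intro p hp hnp
      simp only [Finset.mem_filter] at hp hnp
      have : p.1 = p.2 := le_antisymm (not_lt.mp (hnp ⟨hp.1, ·⟩)) (not_lt.mp hp.2)
      rw [this]; exact hdiag p.2
  rw [h2]
  have h3 : ∑ p ∈ (Finset.univ ×ˢ Finset.univ).filter
        (fun p : Fin n × Fin n => p.2 < p.1), f p.1 p.2
      = ∑ p ∈ (Finset.univ ×ˢ Finset.univ).filter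
        (fun p : Fin n × Fin n => p.1 < p.2), f p.2 p.1 := by
    refine Finset.sum_nbij' Prod.swap Prod.swap ?_ ?_ ?_ ?_ ?_
    · intro p hp
      simp only [Finset.mem_filter, Finset.mem_product, Finset.mem_univ, true_and] at hp ⊢
      exact hp
    · intro p hp
      simp only [Finset.mem_filter, Finset.mem_product, Finset.mem_univ, true_and] at hp ⊢
      exact hp
    · intro p _; simp
    · intro p _; simp
    · intro p _; simp
  rw [h3, ← Finset.sum_add_distrib]
  refine Finset.sum_subtype _ (fun p => ?_) _
  simp

lemma oab_symA (B : PI n → Bool) (e : Fin n → Fin k) (a b : Fin k) :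
    oab (symA B) e a b = (if a = b then (2 : ℝ) else 1) * Xc (Tset e a b) B := by
  unfold oab
  rw [sum_offdiag (fun i j => if e i = a ∧ e j = b ∧ symA B i j = true then (1 : ℝ) else 0)
    (fun i => by simp [symA])]
  unfold Xc Tset
  rw [Finset.sum_filter, Finset.mul_sum]
  refine Finset.sum_congr rfl fun l _ => ?_
  rw [symA_apply, symA_apply']
  by_cases hab : a = b
  · subst hab
    by_cases hB : B l <;> by_cases h1 : e l.1.1 = a <;> by_cases h2 : e l.1.2 = a <;>
      simp [hB, h1, h2] <;> norm_num
  · by_cases hB : B l <;> by_cases h1 : e l.1.1 = a <;> by_cases h2 : e l.1.2 = b <;>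
      by_cases h3 : e l.1.1 = b <;> by_cases h4 : e l.1.2 = a <;>
      simp_all <;> ring

lemma Tcard_ge {α : ℝ} (e : Fin n → Fin k) (a b : Fin k)
    (h2 : 2 ≤ α * n) (ha : α * n ≤ (nCount e a : ℝ)) (hb : α * n ≤ (nCount e b : ℝ)) :
    α ^ 2 * n ^ 2 / 4 ≤ ((Tset e a b).card : ℝ) := by
  have h := nab_eq_Tcard e a b
  by_cases hab : a = b
  · subst hab
    rw [if_pos rfl] at h
    rw [nab, if_pos rfl] at h
    nlinarith [h, ha, h2]
  · rw [if_neg hab] at h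
    rw [nab, if_neg hab] at h
    nlinarith [h, ha, hb, h2]

def wt (ρn : ℝ) (S : Matrix (Fin k) (Fin k) ℝ) (z : Fin n → Fin k) (l : PI n) : ℝ :=
  ρn * S (z l.1.1) (z l.1.2)

lemma edgeDensity_symA (ρn : ℝ) (S : Matrix (Fin k) (Fin k) ℝ) (z : Fin n → Fin k)
    (B : PI n → Bool) :
    edgeDensity ρn S z (symA B) = wprod (wt ρn S z) B := by
  unfold edgeDensity wprod wt
  rw [Finset.prod_subtype (p := fun p : Fin n × Fin n => p.1 < p.2)
    (Finset.univ.filter fun p : Fin n × Fin n => p.1 < p.2)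
    (fun p => by simp)
    (fun p : Fin n × Fin n =>
      if symA B p.1 p.2 = true then ρn * S (z p.1) (z p.2) else 1 - ρn * S (z p.1) (z p.2))]
  refine Finset.prod_congr rfl fun l _ => ?_
  rw [symA_apply]

lemma condProb_eq (ρn : ℝ) (S : Matrix (Fin k) (Fin k) ℝ) (z : Fin n → Fin k)
    (E : (Fin n → Fin n → Bool) → Prop) :
    condProb ρn S z E
      = ∑ B : PI n → Bool, wprod (wt ρn S z) B * (if E (symA B) then (1 : ℝ) else 0) := by
  unfold condProb
  have hpt : ∀ A, (if ValidAdj A ∧ E A then edgeDensity ρn S z A else 0)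
      = (if ValidAdj A then edgeDensity ρn S z A * (if E A then (1 : ℝ) else 0) else 0) := by
    intro A; by_cases h1 : ValidAdj A <;> by_cases h2 : E A <;> simp [h1, h2]
  simp_rw [hpt]
  rw [sum_valid (fun A => edgeDensity ρn S z A * (if E A then (1 : ℝ) else 0))]
  refine Finset.sum_congr rfl fun B _ => ?_
  rw [edgeDensity_symA]

lemma condProb_compl (ρn : ℝ) (S : Matrix (Fin k) (Fin k) ℝ) (z : Fin n → Fin k)
    (E : (Fin n → Fin n → Bool) → Prop) :
    condProb ρn S z E + condProb ρn S z (fun A => ¬ E A) = 1 := by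
  rw [condProb_eq, condProb_eq, ← Finset.sum_add_distrib]
  refine Eq.trans (Finset.sum_congr rfl fun B _ => ?_) (total_generic (wt ρn S z))
  by_cases h : E (symA B) <;> simp [h]

lemma condProb_nonneg (ρn : ℝ) (S : Matrix (Fin k) (Fin k) ℝ) (z : Fin n → Fin k)
    (E : (Fin n → Fin n → Bool) → Prop)
    (hw0 : ∀ l : PI n, 0 ≤ wt ρn S z l) (hw1 : ∀ l : PI n, wt ρn S z l ≤ 1) :
    0 ≤ condProb ρn S z E := by
  rw [condProb_eq]
  refine Finset.sum_nonneg fun B _ => mul_nonneg (wprod_nonneg hw0 hw1 B) ?_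
  split <;> norm_num

set_option maxHeartbeats 2000000 in
lemma union_bound (hk : 0 < k) (S : Matrix (Fin k) (Fin k) ℝ) (hSpos : ∀ a b, 0 < S a b)
    (ρn : ℝ) (hρpos : 0 < ρn) (hρs : ρn * sMax S ≤ 1 / 2)
    (α δ : ℝ) (hδ0 : 0 < δ) (hn2 : 2 ≤ α * (n : ℝ)) (z : Fin n → Fin k) :
    condProb ρn S z (fun A => ¬ ∀ a b : Fin k, ∀ e : Fin n → Fin k, inF α e →
        oab A e a b / (ρn * nab e a b) ∈ Set.Ioo (sMin S - δ) (sMax S + δ))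
      ≤ (k : ℝ) ^ n * (k : ℝ) ^ 2 *
        (2 * Real.exp (-(min 1 (δ / (2 * sMax S)) * δ / 2) * (ρn * (α ^ 2 * n ^ 2 / 4)))) := by
  haveI : Nonempty (Fin k) := ⟨⟨0, hk⟩⟩
  have hfin : (Set.range fun p : Fin k × Fin k => S p.1 p.2).Finite := Set.finite_range _
  have hsmax_ge : ∀ a b, S a b ≤ sMax S := fun a b => le_csSup hfin.bddAbove ⟨(a, b), rfl⟩
  have hsmin_le : ∀ a b, sMin S ≤ S a b := fun a b => csInf_le hfin.bddBelow ⟨(a, b), rfl⟩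
  obtain ⟨a0⟩ := (inferInstance : Nonempty (Fin k))
  have hsmaxpos : 0 < sMax S := lt_of_lt_of_le (hSpos a0 a0) (hsmax_ge a0 a0)
  have hminpos : 0 < min 1 (δ / (2 * sMax S)) := lt_min one_pos (by positivity)
  have hcpos : 0 < min 1 (δ / (2 * sMax S)) * δ / 2 := by positivity
  have hw0 : ∀ l : PI n, 0 ≤ wt ρn S z l := fun l => (mul_pos hρpos (hSpos _ _)).le
  have hw1 : ∀ l : PI n, wt ρn S z l ≤ 1 := by
    intro l
    have h := mul_le_mul_of_nonneg_left (hsmax_ge (z l.1.1) (z l.1.2)) hρpos.le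
    unfold wt; linarith
  have hlo : ∀ l : PI n, ρn * sMin S ≤ wt ρn S z l :=
    fun l => mul_le_mul_of_nonneg_left (hsmin_le _ _) hρpos.le
  have hhi : ∀ l : PI n, wt ρn S z l ≤ ρn * sMax S :=
    fun l => mul_le_mul_of_nonneg_left (hsmax_ge _ _) hρpos.le
  have ind_nonneg : ∀ (P : Prop) (inst : Decidable P), (0 : ℝ) ≤ (@ite ℝ P inst 1 0) := by
    intro P inst; split <;> norm_num
  rw [condProb_eq]
  -- per (e,a,b) bound
  have key : ∀ (e : Fin n → Fin k) (a b : Fin k),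
      (∑ B : PI n → Bool, wprod (wt ρn S z) B *
        (if inF α e ∧ oab (symA B) e a b / (ρn * nab e a b) ∉ Set.Ioo (sMin S - δ) (sMax S + δ)
          then (1 : ℝ) else 0))
      ≤ 2 * Real.exp (-(min 1 (δ / (2 * sMax S)) * δ / 2) * (ρn * (α ^ 2 * n ^ 2 / 4))) := by
    intro e a b
    by_cases he : inF α e
    · have hm : α ^ 2 * n ^ 2 / 4 ≤ ((Tset e a b).card : ℝ) := Tcard_ge e a b hn2 (he a) (he b)
      have hmpos : (0 : ℝ) < ((Tset e a b).card : ℝ) := by nlinarith [hm, hn2]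
      have hρm : 0 < ρn * ((Tset e a b).card : ℝ) := mul_pos hρpos hmpos
      have hratio : ∀ B : PI n → Bool,
          oab (symA B) e a b / (ρn * nab e a b)
            = Xc (Tset e a b) B / (ρn * ((Tset e a b).card : ℝ)) := by
        intro B
        rw [oab_symA, nab_eq_Tcard]
        by_cases hab : a = b
        · rw [if_pos hab,
            show ρn * ((2 : ℝ) * ((Tset e a b).card : ℝ))
              = (2 : ℝ) * (ρn * ((Tset e a b).card : ℝ)) by ring]
          exact mul_div_mul_left _ _ two_ne_zero
        · rw [if_neg hab, one_mul, one_mul]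
      have hsplit : ∀ B : PI n → Bool,
          (if inF α e ∧ oab (symA B) e a b / (ρn * nab e a b) ∉ Set.Ioo (sMin S - δ) (sMax S + δ)
            then (1 : ℝ) else 0)
          ≤ (if (sMax S + δ) * (ρn * ((Tset e a b).card : ℝ)) ≤ Xc (Tset e a b) B
              then (1 : ℝ) else 0)
            + (if Xc (Tset e a b) B ≤ (sMin S - δ) * (ρn * ((Tset e a b).card : ℝ))
              then (1 : ℝ) else 0) := by
        intro B
        by_cases h : inF α e ∧
            oab (symA B) e a b / (ρn * nab e a b) ∉ Set.Ioo (sMin S - δ) (sMax S + δ)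
        · rw [if_pos h]
          obtain ⟨-, hbad⟩ := h
          rw [hratio B] at hbad
          rw [Set.mem_Ioo, not_and_or, not_lt, not_lt] at hbad
          rcases hbad with hlo' | hhi'
          · have h1 : Xc (Tset e a b) B ≤ (sMin S - δ) * (ρn * ((Tset e a b).card : ℝ)) :=
              (div_le_iff₀ hρm).mp hlo'
            have := ind_nonneg ((sMax S + δ) * (ρn * ((Tset e a b).card : ℝ)) ≤ Xc (Tset e a b) B) (by infer_instance)
            rw [if_pos h1]
            linarith
          · have h1 : (sMax S + δ) * (ρn * ((Tset e a b).card : ℝ)) ≤ Xc (Tset e a b) B :=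
              (le_div_iff₀ hρm).mp hhi'
            have := ind_nonneg (Xc (Tset e a b) B ≤ (sMin S - δ) * (ρn * ((Tset e a b).card : ℝ))) (by infer_instance)
            rw [if_pos h1]
            linarith
        · rw [if_neg h]
          exact add_nonneg (ind_nonneg _ _) (ind_nonneg _ _)
      have hbt := bad_tails (wt ρn S z) (Tset e a b) ρn (sMin S) (sMax S) δ hρpos hsmaxpos hδ0
        hw0 hw1 (fun l _ => hlo l) (fun l _ => hhi l)
      have hmono : Real.exp (-(min 1 (δ / (2 * sMax S)) * δ / 2) * (ρn * ((Tset e a b).card : ℝ)))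
          ≤ Real.exp (-(min 1 (δ / (2 * sMax S)) * δ / 2) * (ρn * (α ^ 2 * n ^ 2 / 4))) := by
        apply Real.exp_le_exp.mpr
        have h1 : ρn * (α ^ 2 * n ^ 2 / 4) ≤ ρn * ((Tset e a b).card : ℝ) :=
          mul_le_mul_of_nonneg_left hm hρpos.le
        nlinarith [hcpos, h1]
      calc ∑ B : PI n → Bool, wprod (wt ρn S z) B *
            (if inF α e ∧ oab (symA B) e a b / (ρn * nab e a b) ∉ Set.Ioo (sMin S - δ) (sMax S + δ)
              then (1 : ℝ) else 0)
          ≤ ∑ B : PI n → Bool, (wprod (wt ρn S z) B *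
              (if (sMax S + δ) * (ρn * ((Tset e a b).card : ℝ)) ≤ Xc (Tset e a b) B
                then (1 : ℝ) else 0)
            + wprod (wt ρn S z) B *
              (if Xc (Tset e a b) B ≤ (sMin S - δ) * (ρn * ((Tset e a b).card : ℝ))
                then (1 : ℝ) else 0)) := by
            refine Finset.sum_le_sum fun B _ => ?_
            rw [← mul_add]
            exact mul_le_mul_of_nonneg_left (hsplit B) (wprod_nonneg hw0 hw1 B)
        _ = (∑ B : PI n → Bool, wprod (wt ρn S z) B *
              (if (sMax S + δ) * (ρn * ((Tset e a b).card : ℝ)) ≤ Xc (Tset e a b) B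
                then (1 : ℝ) else 0))
            + ∑ B : PI n → Bool, wprod (wt ρn S z) B *
              (if Xc (Tset e a b) B ≤ (sMin S - δ) * (ρn * ((Tset e a b).card : ℝ))
                then (1 : ℝ) else 0) := Finset.sum_add_distrib
        _ ≤ Real.exp (-(min 1 (δ / (2 * sMax S)) * δ / 2) * (ρn * ((Tset e a b).card : ℝ)))
            + Real.exp (-(min 1 (δ / (2 * sMax S)) * δ / 2) * (ρn * ((Tset e a b).card : ℝ))) :=
            add_le_add hbt.1 hbt.2
        _ ≤ 2 * Real.exp (-(min 1 (δ / (2 * sMax S)) * δ / 2) * (ρn * (α ^ 2 * n ^ 2 / 4))) := by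
            linarith [hmono]
    · have h0 : ∑ B : PI n → Bool, wprod (wt ρn S z) B *
          (if inF α e ∧ oab (symA B) e a b / (ρn * nab e a b) ∉ Set.Ioo (sMin S - δ) (sMax S + δ)
            then (1 : ℝ) else 0) = 0 := by
        refine Finset.sum_eq_zero fun B _ => ?_
        rw [if_neg (fun hc => he hc.1), mul_zero]
      rw [h0]
      positivity
  -- pointwise indicator bound
  have hpt : ∀ B : PI n → Bool,
      (if ¬ ∀ a b : Fin k, ∀ e : Fin n → Fin k, inF α e →
          oab (symA B) e a b / (ρn * nab e a b) ∈ Set.Ioo (sMin S - δ) (sMax S + δ)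
        then (1 : ℝ) else 0)
      ≤ ∑ e : Fin n → Fin k, ∑ a : Fin k, ∑ b : Fin k,
          (if inF α e ∧ oab (symA B) e a b / (ρn * nab e a b) ∉ Set.Ioo (sMin S - δ) (sMax S + δ)
            then (1 : ℝ) else 0) := by
    intro B
    by_cases h : ∀ a b : Fin k, ∀ e : Fin n → Fin k, inF α e →
        oab (symA B) e a b / (ρn * nab e a b) ∈ Set.Ioo (sMin S - δ) (sMax S + δ)
    · rw [if_neg (not_not_intro h)]
      exact Finset.sum_nonneg fun e _ => Finset.sum_nonneg fun a _ =>
        Finset.sum_nonneg fun b _ => ind_nonneg _ _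
    · rw [if_pos h]
      push_neg at h
      obtain ⟨a, b, e, he, hbad⟩ := h
      have h1 : (1 : ℝ) ≤ ∑ b' : Fin k,
          (if inF α e ∧ oab (symA B) e a b' / (ρn * nab e a b') ∉ Set.Ioo (sMin S - δ) (sMax S + δ)
            then (1 : ℝ) else 0) := by
        have hval : (if inF α e ∧ oab (symA B) e a b / (ρn * nab e a b) ∉ Set.Ioo (sMin S - δ) (sMax S + δ)
            then (1 : ℝ) else 0) = 1 := if_pos ⟨he, hbad⟩
        calc (1 : ℝ) = _ := hval.symm
          _ ≤ _ := Finset.single_le_sum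
            (f := fun b' => if inF α e ∧ oab (symA B) e a b' / (ρn * nab e a b')
                ∉ Set.Ioo (sMin S - δ) (sMax S + δ) then (1 : ℝ) else 0)
            (fun i _ => ind_nonneg _ _) (Finset.mem_univ b)
      have h2 : (1 : ℝ) ≤ ∑ a' : Fin k, ∑ b' : Fin k,
          (if inF α e ∧ oab (symA B) e a' b' / (ρn * nab e a' b') ∉ Set.Ioo (sMin S - δ) (sMax S + δ)
            then (1 : ℝ) else 0) :=
        h1.trans (Finset.single_le_sum
          (f := fun a' => ∑ b' : Fin k,
            (if inF α e ∧ oab (symA B) e a' b' / (ρn * nab e a' b') ∉ Set.Ioo (sMin S - δ) (sMax S + δ)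
              then (1 : ℝ) else 0))
          (fun i _ => Finset.sum_nonneg fun b' _ => ind_nonneg _ _) (Finset.mem_univ a))
      exact h2.trans (Finset.single_le_sum
        (f := fun e' => ∑ a' : Fin k, ∑ b' : Fin k,
          (if inF α e' ∧ oab (symA B) e' a' b' / (ρn * nab e' a' b') ∉ Set.Ioo (sMin S - δ) (sMax S + δ)
            then (1 : ℝ) else 0))
        (fun i _ => Finset.sum_nonneg fun a' _ => Finset.sum_nonneg fun b' _ => ind_nonneg _ _)
        (Finset.mem_univ e))
  have main : (∑ B : PI n → Bool, wprod (wt ρn S z) B *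
        (if ¬ ∀ a b : Fin k, ∀ e : Fin n → Fin k, inF α e →
            oab (symA B) e a b / (ρn * nab e a b) ∈ Set.Ioo (sMin S - δ) (sMax S + δ)
          then (1 : ℝ) else 0))
      ≤ (k : ℝ) ^ n * (k : ℝ) ^ 2 *
        (2 * Real.exp (-(min 1 (δ / (2 * sMax S)) * δ / 2) * (ρn * (α ^ 2 * n ^ 2 / 4)))) :=
    calc ∑ B : PI n → Bool, wprod (wt ρn S z) B *
        (if ¬ ∀ a b : Fin k, ∀ e : Fin n → Fin k, inF α e →
            oab (symA B) e a b / (ρn * nab e a b) ∈ Set.Ioo (sMin S - δ) (sMax S + δ)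
          then (1 : ℝ) else 0)
      ≤ ∑ B : PI n → Bool, wprod (wt ρn S z) B *
          (∑ e : Fin n → Fin k, ∑ a : Fin k, ∑ b : Fin k,
            (if inF α e ∧ oab (symA B) e a b / (ρn * nab e a b) ∉ Set.Ioo (sMin S - δ) (sMax S + δ)
              then (1 : ℝ) else 0)) := by
          refine Finset.sum_le_sum fun B _ => ?_
          exact mul_le_mul_of_nonneg_left (hpt B) (wprod_nonneg hw0 hw1 B)
      _ = ∑ e : Fin n → Fin k, ∑ a : Fin k, ∑ b : Fin k, ∑ B : PI n → Bool,
          wprod (wt ρn S z) B *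
            (if inF α e ∧ oab (symA B) e a b / (ρn * nab e a b) ∉ Set.Ioo (sMin S - δ) (sMax S + δ)
              then (1 : ℝ) else 0) := by
        simp_rw [Finset.mul_sum]
        rw [Finset.sum_comm]
        refine Finset.sum_congr rfl fun e _ => ?_
        rw [Finset.sum_comm]
        refine Finset.sum_congr rfl fun a _ => ?_
        rw [Finset.sum_comm]
      _ ≤ ∑ _e : Fin n → Fin k, ∑ _a : Fin k, ∑ _b : Fin k,
          2 * Real.exp (-(min 1 (δ / (2 * sMax S)) * δ / 2) * (ρn * (α ^ 2 * n ^ 2 / 4))) := by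
        refine Finset.sum_le_sum fun e _ => Finset.sum_le_sum fun a _ =>
          Finset.sum_le_sum fun b _ => key e a b
      _ = (k : ℝ) ^ n * (k : ℝ) ^ 2 *
          (2 * Real.exp (-(min 1 (δ / (2 * sMax S)) * δ / 2) * (ρn * (α ^ 2 * n ^ 2 / 4)))) := by
        simp only [Finset.sum_const, Finset.card_univ, nsmul_eq_mul, Fintype.card_fun,
          Fintype.card_fin]
        push_cast
        ring
  convert main using 2 with B hB
  congr 1
  split_ifs <;> rfl

lemma Bn_tendsto {k : ℕ} (hk : 0 < k) (c α : ℝ) (hc : 0 < c) (hα : 0 < α)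
    (ρ : ℕ → ℝ) (hρpos : ∀ n, 0 < ρ n)
    (hnρ : Tendsto (fun n : ℕ => (n : ℝ) * ρ n) atTop atTop) :
    Tendsto (fun n : ℕ => (k : ℝ) ^ n * (k : ℝ) ^ 2 *
      (2 * Real.exp (-c * (ρ n * (α ^ 2 * (n : ℝ) ^ 2 / 4))))) atTop (nhds 0) := by
  have hk0 : (0 : ℝ) < k := by exact_mod_cast hk
  have hk1 : (1 : ℝ) ≤ k := by exact_mod_cast hk
  have hlogk : 0 ≤ Real.log k := Real.log_nonneg hk1
  have hglim : Tendsto (fun n : ℕ => 2 * (k : ℝ) ^ 2 * Real.exp (-(n : ℝ))) atTop (nhds 0) := by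
    have h1 : Tendsto (fun n : ℕ => Real.exp (-(n : ℝ))) atTop (nhds 0) :=
      (Real.tendsto_exp_neg_atTop_nhds_zero).comp tendsto_natCast_atTop_atTop
    simpa using h1.const_mul (2 * (k : ℝ) ^ 2)
  refine squeeze_zero' ?_ ?_ hglim
  · filter_upwards with n
    positivity
  · have h1 : ∀ᶠ n : ℕ in atTop, (4 * (Real.log k + 1)) / (c * α ^ 2) ≤ (n : ℝ) * ρ n :=
      hnρ.eventually_ge_atTop _
    filter_upwards [h1] with n hn
    have hkpow : (k : ℝ) ^ n = Real.exp ((n : ℝ) * Real.log k) := by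
      rw [← Real.log_pow, Real.exp_log (pow_pos hk0 n)]
    have hkey : (Real.log k + 1) * n ≤ c * (ρ n * (α ^ 2 * (n : ℝ) ^ 2 / 4)) := by
      have e1 : c * (ρ n * (α ^ 2 * (n : ℝ) ^ 2 / 4)) = (c * α ^ 2 / 4) * ((n : ℝ) * ρ n) * n := by
        ring
      have hpos : 0 < c * α ^ 2 / 4 := by positivity
      have e2 : (c * α ^ 2 / 4) * ((4 * (Real.log k + 1)) / (c * α ^ 2)) = Real.log k + 1 := by
        field_simp
      rw [e1]
      have h3 : (c * α ^ 2 / 4) * ((4 * (Real.log k + 1)) / (c * α ^ 2)) * n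
          ≤ (c * α ^ 2 / 4) * ((n : ℝ) * ρ n) * n := by
        refine mul_le_mul_of_nonneg_right ?_ (Nat.cast_nonneg n)
        exact mul_le_mul_of_nonneg_left hn hpos.le
      rw [e2] at h3
      exact h3
    rw [hkpow]
    calc Real.exp ((n : ℝ) * Real.log k) * (k : ℝ) ^ 2 *
          (2 * Real.exp (-c * (ρ n * (α ^ 2 * (n : ℝ) ^ 2 / 4))))
        = 2 * (k : ℝ) ^ 2 *
          Real.exp ((n : ℝ) * Real.log k - c * (ρ n * (α ^ 2 * (n : ℝ) ^ 2 / 4))) := by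
          rw [neg_mul, Real.exp_neg, Real.exp_sub]
          field_simp
      _ ≤ 2 * (k : ℝ) ^ 2 * Real.exp (-(n : ℝ)) := by
          refine mul_le_mul_of_nonneg_left (Real.exp_le_exp.mpr ?_) (by positivity)
          nlinarith [hkey]

/-- The event of statement 13, as a function of `n`. -/
def Ev (k : ℕ) (α lo hi ρn : ℝ) (n : ℕ) :
    (Fin n → Fin k) → (Fin n → Fin n → Bool) → Prop :=
  fun _ A => ∀ a b : Fin k, ∀ e : Fin n → Fin k, inF α e →
    oab A e a b / (ρn * nab e a b) ∈ Set.Ioo lo hi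

/-- rescaled empirical edge probabilities lie in `(s_min−δ, s_max+δ)`
uniformly over `F(n,α)`, with probability tending to one. -/
theorem stmt13 (k : ℕ) (π : Fin k → ℝ) (hπpos : ∀ a, 0 < π a) (hπsum : ∑ a, π a = 1)
    (S : Matrix (Fin k) (Fin k) ℝ) (hSsym : S.IsSymm) (hSpos : ∀ a b, 0 < S a b)
    (ρ : ℕ → ℝ) (hρpos : ∀ n, 0 < ρ n) (hρs : ∀ n, ρ n * sMax S ≤ 1 / 2)
    (hnρ : Tendsto (fun n : ℕ => (n : ℝ) * ρ n) atTop atTop)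
    (α δ : ℝ) (hα : 0 < α) (hδ0 : 0 < δ) (hδ : δ < sMin S / 2) :
    Tendsto (fun n : ℕ => sbmProb π (ρ n) S
        (fun (z : Fin n → Fin k) (A : Fin n → Fin n → Bool) =>
          ∀ a b : Fin k, ∀ e : Fin n → Fin k, inF α e →
            oab A e a b / (ρ n * nab e a b) ∈ Set.Ioo (sMin S - δ) (sMax S + δ)))
      atTop (nhds 1) := by
  have hk : 0 < k := by
    rcases Nat.eq_zero_or_pos k with h | h
    · subst h; simp at hπsum
    · exact h
  haveI : Nonempty (Fin k) := ⟨⟨0, hk⟩⟩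
  have hfin : (Set.range fun p : Fin k × Fin k => S p.1 p.2).Finite := Set.finite_range _
  have hsmax_ge : ∀ a b, S a b ≤ sMax S := fun a b => le_csSup hfin.bddAbove ⟨(a, b), rfl⟩
  obtain ⟨a0⟩ := (inferInstance : Nonempty (Fin k))
  have hsmaxpos : 0 < sMax S := lt_of_lt_of_le (hSpos a0 a0) (hsmax_ge a0 a0)
  have hminpos : 0 < min 1 (δ / (2 * sMax S)) := lt_min one_pos (by positivity)
  have hcpos : 0 < min 1 (δ / (2 * sMax S)) * δ / 2 :=
    div_pos (mul_pos hminpos hδ0) two_pos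
  have hsum1 : ∀ n : ℕ, ∑ z : Fin n → Fin k, ∏ i, π (z i) = 1 := by
    intro n
    refine Eq.trans (sum_fn_prod (κ := Fin k) (fun _ a => π a)) ?_
    simp [hπsum]
  have hw0 : ∀ (n : ℕ) (z : Fin n → Fin k) (l : PI n), 0 ≤ wt (ρ n) S z l :=
    fun n z l => (mul_pos (hρpos n) (hSpos _ _)).le
  have hw1 : ∀ (n : ℕ) (z : Fin n → Fin k) (l : PI n), wt (ρ n) S z l ≤ 1 := by
    intro n z l
    have h := mul_le_mul_of_nonneg_left (hsmax_ge (z l.1.1) (z l.1.2)) (hρpos n).le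
    have h2 := hρs n
    unfold wt
    linarith
  show Tendsto (fun n : ℕ => sbmProb π (ρ n) S (Ev k α (sMin S - δ) (sMax S + δ) (ρ n) n))
    atTop (nhds 1)
  have hbound : ∀ n : ℕ, 2 ≤ α * (n : ℝ) →
      1 - (k : ℝ) ^ n * (k : ℝ) ^ 2 *
          (2 * Real.exp (-(min 1 (δ / (2 * sMax S)) * δ / 2) * (ρ n * (α ^ 2 * (n : ℝ) ^ 2 / 4))))
        ≤ sbmProb π (ρ n) S (Ev k α (sMin S - δ) (sMax S + δ) (ρ n) n)
      ∧ sbmProb π (ρ n) S (Ev k α (sMin S - δ) (sMax S + δ) (ρ n) n) ≤ 1 := by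
    intro n hn2
    have hub : ∀ z : Fin n → Fin k,
        condProb (ρ n) S z (fun A => ¬ Ev k α (sMin S - δ) (sMax S + δ) (ρ n) n z A)
          ≤ (k : ℝ) ^ n * (k : ℝ) ^ 2 *
            (2 * Real.exp (-(min 1 (δ / (2 * sMax S)) * δ / 2)
              * (ρ n * (α ^ 2 * (n : ℝ) ^ 2 / 4)))) :=
      fun z => union_bound hk S hSpos (ρ n) (hρpos n) (hρs n) α δ hδ0 hn2 z
    have hpos : ∀ z : Fin n → Fin k,
        0 ≤ condProb (ρ n) S z (fun A => ¬ Ev k α (sMin S - δ) (sMax S + δ) (ρ n) n z A) :=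
      fun z => condProb_nonneg _ _ _ _ (hw0 n z) (hw1 n z)
    have hcompl : ∀ z : Fin n → Fin k,
        condProb (ρ n) S z (Ev k α (sMin S - δ) (sMax S + δ) (ρ n) n z)
          = 1 - condProb (ρ n) S z (fun A => ¬ Ev k α (sMin S - δ) (sMax S + δ) (ρ n) n z A) := by
      intro z
      have h := condProb_compl (ρ n) S z (Ev k α (sMin S - δ) (sMax S + δ) (ρ n) n z)
      linarith
    have hπz : ∀ z : Fin n → Fin k, 0 ≤ ∏ i, π (z i) :=
      fun z => Finset.prod_nonneg fun i _ => (hπpos _).le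
    constructor
    · unfold sbmProb
      calc 1 - (k : ℝ) ^ n * (k : ℝ) ^ 2 *
            (2 * Real.exp (-(min 1 (δ / (2 * sMax S)) * δ / 2)
              * (ρ n * (α ^ 2 * (n : ℝ) ^ 2 / 4))))
          = ∑ z : Fin n → Fin k, (∏ i, π (z i)) *
            (1 - (k : ℝ) ^ n * (k : ℝ) ^ 2 *
              (2 * Real.exp (-(min 1 (δ / (2 * sMax S)) * δ / 2)
                * (ρ n * (α ^ 2 * (n : ℝ) ^ 2 / 4))))) := by
            rw [← Finset.sum_mul, hsum1 n, one_mul]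
        _ ≤ ∑ z : Fin n → Fin k, (∏ i, π (z i)) *
              condProb (ρ n) S z (Ev k α (sMin S - δ) (sMax S + δ) (ρ n) n z) := by
            refine Finset.sum_le_sum fun z _ => ?_
            refine mul_le_mul_of_nonneg_left ?_ (hπz z)
            rw [hcompl z]
            linarith [hub z]
    · unfold sbmProb
      calc ∑ z : Fin n → Fin k, (∏ i, π (z i)) *
            condProb (ρ n) S z (Ev k α (sMin S - δ) (sMax S + δ) (ρ n) n z)
          ≤ ∑ z : Fin n → Fin k, (∏ i, π (z i)) * 1 := by
            refine Finset.sum_le_sum fun z _ => ?_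
            refine mul_le_mul_of_nonneg_left ?_ (hπz z)
            rw [hcompl z]
            linarith [hpos z]
        _ = 1 := by
            simp only [mul_one]
            exact hsum1 n
  have hev2 : ∀ᶠ n : ℕ in atTop, 2 ≤ α * (n : ℝ) := by
    have h : Tendsto (fun n : ℕ => α * (n : ℝ)) atTop atTop :=
      (tendsto_natCast_atTop_atTop (R := ℝ)).const_mul_atTop hα
    exact h.eventually_ge_atTop 2
  have hBn := Bn_tendsto hk (min 1 (δ / (2 * sMax S)) * δ / 2) α hcpos hα ρ hρpos hnρ
  have hg : Tendsto (fun n : ℕ => 1 - (k : ℝ) ^ n * (k : ℝ) ^ 2 *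
      (2 * Real.exp (-(min 1 (δ / (2 * sMax S)) * δ / 2) * (ρ n * (α ^ 2 * (n : ℝ) ^ 2 / 4)))))
      atTop (nhds 1) := by
    have := (tendsto_const_nhds (x := (1 : ℝ)) (f := atTop (α := ℕ))).sub hBn
    simpa using this
  refine tendsto_of_tendsto_of_tendsto_of_le_of_le' hg tendsto_const_nhds ?_ ?_
  · filter_upwards [hev2] with n hn
    exact (hbound n hn).1
  · filter_upwards [hev2] with n hn
    exact (hbound n hn).2
end SBM
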